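/- If g₅₅ and g₆₆ have the same sign, then the conditions ρ₂ = ρ₂₄ and ρ₄ = ρ₄₂ (with f₂ ≠ f₄ and all denominators nonzero) force f'₅ = f'₆ = 0. -/

import Mathlib

/-- if `g₅₅` and `g₆₆` have the same sign, the conditions
`ρ₂ = ρ₂₄` and `ρ₄ = ρ₄₂` force `f'₅ = f'₆ = 0`. -/
theorem rho_conditions_force_zero (f₂ f₄ f₅ f₆ f₅' f₆' g₅₅ g₆₆ : ℝ)
    (h24 : f₂ ≠ f₄) (h52 : f₅ ≠ f₂) (h54 : f₅ ≠ f₄) (h62 : f₆ ≠ f₂) (h64 : f₆ ≠ f₄)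
    (hg₅ : g₅₅ ≠ 0) (hg₆ : g₆₆ ≠ 0) (hsign : 0 < g₅₅ * g₆₆)
    (hρ₂ : -(1/4) * (f₅' ^ 2 / ((f₅ - f₂) ^ 2 * g₅₅) + f₆' ^ 2 / ((f₆ - f₂) ^ 2 * g₆₆)) =
      -(1/4) * (f₅' ^ 2 / ((f₅ - f₂) * (f₅ - f₄) * g₅₅) +
        f₆' ^ 2 / ((f₆ - f₂) * (f₆ - f₄) * g₆₆)))
    (hρ₄ : -(1/4) * (f₅' ^ 2 / ((f₅ - f₄) ^ 2 * g₅₅) + f₆' ^ 2 / ((f₆ - f₄) ^ 2 * g₆₆)) =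
      -(1/4) * (f₅' ^ 2 / ((f₅ - f₄) * (f₅ - f₂) * g₅₅) +
        f₆' ^ 2 / ((f₆ - f₄) * (f₆ - f₂) * g₆₆))) :
    f₅' = 0 ∧ f₆' = 0 := by
  have ha : f₅ - f₂ ≠ 0 := sub_ne_zero.mpr h52
  have hb : f₅ - f₄ ≠ 0 := sub_ne_zero.mpr h54
  have hc : f₆ - f₂ ≠ 0 := sub_ne_zero.mpr h62
  have hd : f₆ - f₄ ≠ 0 := sub_ne_zero.mpr h64
  have he : f₂ - f₄ ≠ 0 := sub_ne_zero.mpr h24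
  field_simp at hρ₂ hρ₄
  have h1 : f₅' ^ 2 * g₆₆ * (f₆ - f₂) ^ 2 * (f₆ - f₄)
      + f₆' ^ 2 * g₅₅ * (f₅ - f₂) ^ 2 * (f₅ - f₄) = 0 := by
    have hne : (-4 * (f₂ - f₄) * g₅₅ * g₆₆ * (f₅ - f₂) * (f₆ - f₂)) ≠ 0 := by
      simp [he, hg₅, hg₆, ha, hc]
    apply mul_left_cancel₀ hne
    linear_combination (4 * g₅₅ * g₆₆ * (f₅ - f₂) * (f₆ - f₂)) * hρ₂
  have h2 : f₅' ^ 2 * g₆₆ * (f₆ - f₄) ^ 2 * (f₆ - f₂)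
      + f₆' ^ 2 * g₅₅ * (f₅ - f₄) ^ 2 * (f₅ - f₂) = 0 := by
    have hne : (4 * (f₂ - f₄) * g₅₅ * g₆₆ * (f₅ - f₄) * (f₆ - f₄)) ≠ 0 := by
      simp [he, hg₅, hg₆, hb, hd]
    apply mul_left_cancel₀ hne
    linear_combination (4 * g₅₅ * g₆₆ * (f₅ - f₄) * (f₆ - f₄)) * hρ₄
  have key : f₅' ^ 2 * g₆₆ * ((f₆ - f₂) * (f₆ - f₄)) ^ 2
      + f₆' ^ 2 * g₅₅ * ((f₅ - f₂) * (f₅ - f₄)) ^ 2 = 0 := by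
    rcases eq_or_ne f₅ f₆ with hf | hf
    · subst hf
      have hab : (f₅ - f₂) ^ 2 * (f₅ - f₄) ≠ 0 := by simp [ha, hb]
      have := (mul_eq_zero.mp (show ((f₅' ^ 2 * g₆₆ + f₆' ^ 2 * g₅₅) *
          ((f₅ - f₂) ^ 2 * (f₅ - f₄)) = 0) by linear_combination h1)).resolve_right hab
      linear_combination ((f₅ - f₂) * (f₅ - f₄)) ^ 2 * this
    · have hne : ((f₂ - f₄) * (f₅ - f₆)) ≠ 0 :=
        mul_ne_zero he (sub_ne_zero.mpr hf)
      apply mul_left_cancel₀ hne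
      linear_combination ((f₅ - f₆) * (f₅ - f₄) * (f₆ - f₄)) * h1
        - ((f₅ - f₆) * (f₅ - f₂) * (f₆ - f₂)) * h2
  rcases (mul_pos_iff.mp hsign) with ⟨h5p, h6p⟩ | ⟨h5n, h6n⟩
  · have t1 : f₅' ^ 2 * g₆₆ * ((f₆ - f₂) * (f₆ - f₄)) ^ 2 = 0 := by
      have p1 : 0 ≤ f₅' ^ 2 * g₆₆ * ((f₆ - f₂) * (f₆ - f₄)) ^ 2 := by positivity
      have p2 : 0 ≤ f₆' ^ 2 * g₅₅ * ((f₅ - f₂) * (f₅ - f₄)) ^ 2 := by positivity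
      linarith
    have t2 : f₆' ^ 2 * g₅₅ * ((f₅ - f₂) * (f₅ - f₄)) ^ 2 = 0 := by
      have p1 : 0 ≤ f₅' ^ 2 * g₆₆ * ((f₆ - f₂) * (f₆ - f₄)) ^ 2 := by positivity
      have p2 : 0 ≤ f₆' ^ 2 * g₅₅ * ((f₅ - f₂) * (f₅ - f₄)) ^ 2 := by positivity
      linarith
    constructor
    · have := mul_ne_zero hg₆ (pow_ne_zero 2 (mul_ne_zero hc hd))
      have h0 : f₅' ^ 2 = 0 := by
        by_contra h
        exact (mul_ne_zero (mul_ne_zero h hg₆) (pow_ne_zero 2 (mul_ne_zero hc hd))) t1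
      exact pow_eq_zero_iff (by norm_num) |>.mp h0
    · have h0 : f₆' ^ 2 = 0 := by
        by_contra h
        exact (mul_ne_zero (mul_ne_zero h hg₅) (pow_ne_zero 2 (mul_ne_zero ha hb))) t2
      exact pow_eq_zero_iff (by norm_num) |>.mp h0
  · have q1 : (0:ℝ) ≤ f₅' ^ 2 * ((f₆ - f₂) * (f₆ - f₄)) ^ 2 := by positivity
    have q2 : (0:ℝ) ≤ f₆' ^ 2 * ((f₅ - f₂) * (f₅ - f₄)) ^ 2 := by positivity
    have p1 : f₅' ^ 2 * g₆₆ * ((f₆ - f₂) * (f₆ - f₄)) ^ 2 ≤ 0 := by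
      have h := mul_nonpos_of_nonpos_of_nonneg h6n.le q1
      linarith [h, (by ring : g₆₆ * (f₅' ^ 2 * ((f₆ - f₂) * (f₆ - f₄)) ^ 2)
        = f₅' ^ 2 * g₆₆ * ((f₆ - f₂) * (f₆ - f₄)) ^ 2)]
    have p2 : f₆' ^ 2 * g₅₅ * ((f₅ - f₂) * (f₅ - f₄)) ^ 2 ≤ 0 := by
      have h := mul_nonpos_of_nonpos_of_nonneg h5n.le q2
      linarith [h, (by ring : g₅₅ * (f₆' ^ 2 * ((f₅ - f₂) * (f₅ - f₄)) ^ 2)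
        = f₆' ^ 2 * g₅₅ * ((f₅ - f₂) * (f₅ - f₄)) ^ 2)]
    have t1 : f₅' ^ 2 * g₆₆ * ((f₆ - f₂) * (f₆ - f₄)) ^ 2 = 0 := by linarith
    have t2 : f₆' ^ 2 * g₅₅ * ((f₅ - f₂) * (f₅ - f₄)) ^ 2 = 0 := by linarith
    constructor
    · have h0 : f₅' ^ 2 = 0 := by
        by_contra h
        exact (mul_ne_zero (mul_ne_zero h hg₆) (pow_ne_zero 2 (mul_ne_zero hc hd))) t1
      exact pow_eq_zero_iff (by norm_num) |>.mp h0
    · have h0 : f₆' ^ 2 = 0 := by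
        by_contra h
        exact (mul_ne_zero (mul_ne_zero h hg₅) (pow_ne_zero 2 (mul_ne_zero ha hb))) t2
      exact pow_eq_zero_iff (by norm_num) |>.mp h0
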